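/- Fix integers n, m, k with 1 ≤ k < n and m ≥ 2. Let V be the number of triples (i, j, a) with 1 ≤ i < j ≤ m and 1 ≤ a ≤ n−k+1 such that x_i(a) = x_j(a). Then E[V²] ≤ m⁴·n²·2^{−2k} + 2·m²·n·k·2^{−k}. -/

import Mathlib

/-- The symbol of `x` at (0-indexed) position `t`, with junk value `false` out of range. -/
def get {n : ℕ} (x : Fin n → Bool) (t : ℕ) : Bool :=
  if h : t < n then x ⟨t, h⟩ else false

/-- The `k`-mer of `x` starting at (0-indexed) position `a`. -/
def kmer {n : ℕ} (k : ℕ) (x : Fin n → Bool) (a : ℕ) : Fin k → Bool :=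
  fun t => get x (a + t.val)

/-- `V`: the number of triples `(i, j, a)` with `i < j` and `x_i(a) = x_j(a)`
(0-indexed positions `a` with `a + k ≤ n`). -/
noncomputable def Vcount (n m k : ℕ) (X : Fin m → Fin n → Bool) : ℕ :=
  Nat.card {q : Fin m × Fin m × ℕ //
    q.1 < q.2.1 ∧ q.2.2 + k ≤ n ∧ kmer k (X q.1) q.2.2 = kmer k (X q.2.1) q.2.2}

/-- Expectation of a real-valued function under the uniform distribution on a
finite sample space. -/
noncomputable def expect {Ω : Type*} [Fintype Ω] (f : Ω → ℝ) : ℝ :=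
  (∑ ω, f ω) / (Fintype.card Ω : ℝ)

open Finset

open Classical in
noncomputable def ind (p : Prop) : ℝ := if p then 1 else 0

lemma ind_nonneg (p : Prop) : 0 ≤ ind p := by
  unfold ind; split <;> norm_num

lemma ind_le_one (p : Prop) : ind p ≤ 1 := by
  unfold ind; split <;> norm_num

lemma ind_of_true {p : Prop} (h : p) : ind p = 1 := by simp [ind, h]
lemma ind_of_false {p : Prop} (h : ¬ p) : ind p = 0 := by simp [ind, h]

lemma ind_mono {p q : Prop} (h : p → q) : ind p ≤ ind q := by
  by_cases hp : p
  · rw [ind_of_true hp, ind_of_true (h hp)]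
  · rw [ind_of_false hp]; exact ind_nonneg q

lemma ind_mul_ind (p q : Prop) : ind p * ind q = ind (p ∧ q) := by
  by_cases hp : p <;> by_cases hq : q <;>
    simp [ind_of_true, ind_of_false, hp, hq]

lemma ind_congr {p q : Prop} (h : p ↔ q) : ind p = ind q := by
  by_cases hp : p
  · rw [ind_of_true hp, ind_of_true (h.1 hp)]
  · rw [ind_of_false hp, ind_of_false (fun hq => hp (h.2 hq))]

lemma sum_ind_le_card {α : Type*} [Fintype α] (p : α → Prop) (B : Finset α)
    (h : ∀ x, p x → x ∈ B) : ∑ x : α, ind (p x) ≤ (B.card : ℝ) := by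
  rw [← Finset.sum_subset (Finset.subset_univ B)
    (fun x _ hx => ind_of_false (fun hp => hx (h x hp)))]
  calc ∑ x ∈ B, ind (p x) ≤ ∑ x ∈ B, 1 := Finset.sum_le_sum (fun x _ => ind_le_one _)
    _ = (B.card : ℝ) := by simp

lemma sum_ind_eq_nat_card {α : Type*} [Fintype α] (p : α → Prop) :
    ∑ x : α, ind (p x) = (Nat.card {x // p x} : ℝ) := by
  classical
  unfold ind
  rw [Finset.sum_boole, Nat.card_eq_fintype_card, Fintype.card_subtype]

/-- number of functions agreeing with `v` on `A` -/
lemma card_agree {n : ℕ} (A : Finset (Fin n)) (v : Fin n → Bool) :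
    ∑ u : Fin n → Bool, ind (∀ s ∈ A, u s = v s) = (2 : ℝ) ^ (n - A.card) := by
  classical
  obtain ⟨E, hE⟩ : ∃ E : ({s : Fin n // s ∈ A} → Bool) × ({s : Fin n // ¬ s ∈ A} → Bool) ≃
      (Fin n → Bool), ∀ g1 g2 (s : Fin n),
        E (g1, g2) s = if h : s ∈ A then g1 ⟨s, h⟩ else g2 ⟨s, h⟩ :=
    ⟨(Equiv.piEquivPiSubtypeProd (fun s : Fin n => s ∈ A) (fun _ => Bool)).symm,
      fun _ _ _ => rfl⟩
  rw [← Equiv.sum_comp E (fun u => ind (∀ s ∈ A, u s = v s))]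
  rw [Fintype.sum_prod_type]
  have key : ∀ (g1 : {s : Fin n // s ∈ A} → Bool) (g2 : {s : Fin n // ¬ s ∈ A} → Bool),
      (∀ s ∈ A, E (g1, g2) s = v s) ↔ g1 = (fun s => v s.1) := by
    intro g1 g2
    constructor
    · intro h; funext s
      have h2 := h s.1 s.2
      rw [hE] at h2
      simpa [s.2] using h2
    · intro h s hs
      subst h
      rw [hE]
      simp [hs]
  have inner : ∀ g1, (∑ g2 : {s : Fin n // ¬ s ∈ A} → Bool,
      ind (∀ s ∈ A, E (g1, g2) s = v s)) =
      (Fintype.card ({s : Fin n // ¬ s ∈ A} → Bool) : ℝ) * ind (g1 = fun s => v s.1) := by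
    intro g1
    rw [Finset.sum_congr rfl (fun g2 _ => ind_congr (key g1 g2))]
    simp [Finset.sum_const, mul_comm]
  rw [Finset.sum_congr rfl (fun g1 _ => inner g1)]
  rw [← Finset.mul_sum]
  have : ∑ g1 : {s : Fin n // s ∈ A} → Bool, ind (g1 = fun s => v s.1) = 1 := by
    rw [Finset.sum_eq_single (fun s => v s.1)]
    · exact ind_of_true rfl
    · exact fun b _ hb => ind_of_false hb
    · intro h; exact absurd (Finset.mem_univ _) h
  rw [this, mul_one, Fintype.card_fun, Fintype.card_subtype]
  simp only [Fintype.card_bool]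
  congr 1
  rw [Finset.filter_not, Finset.card_sdiff_of_subset (Finset.filter_subset _ _), Finset.card_univ,
    Fintype.card_fin, Finset.filter_univ_mem]
  push_cast
  ring

lemma split_sum {n m : ℕ} (c d : Fin m) (hd : d ≠ c) (A : Finset (Fin n))
    (F : (Fin m → Fin n → Bool) → ℝ)
    (hF : ∀ X u, F (Function.update X c u) = F X) :
    ∑ X : Fin m → Fin n → Bool, F X * ind (∀ s ∈ A, X c s = X d s)
      = (∑ X : Fin m → Fin n → Bool, F X) / 2 ^ A.card := by
  classical
  obtain ⟨E, hEc, hEd⟩ : ∃ E : (Fin n → Bool) × ({j : Fin m // j ≠ c} → Fin n → Bool) ≃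
      (Fin m → Fin n → Bool),
      (∀ u Y, E (u, Y) c = u) ∧ (∀ u Y (j : Fin m) (hj : j ≠ c), E (u, Y) j = Y ⟨j, hj⟩) := by
    refine ⟨(Equiv.funSplitAt c (Fin n → Bool)).symm, fun u Y => ?_, fun u Y j hj => ?_⟩
    · simp [Equiv.funSplitAt, Equiv.piSplitAt]
    · simp [Equiv.funSplitAt, Equiv.piSplitAt, hj]
  have hupd : ∀ u u' Y, E (u, Y) = Function.update (E (u', Y)) c u := by
    intro u u' Y
    funext j
    by_cases hj : j = c
    · subst hj; rw [Function.update_self, hEc]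
    · rw [Function.update_of_ne hj, hEd u Y j hj, hEd u' Y j hj]
  set u0 : Fin n → Bool := fun _ => false with hu0
  have hFE : ∀ u Y, F (E (u, Y)) = F (E (u0, Y)) := by
    intro u Y
    rw [hupd u u0 Y, hF]
  have inner1 : ∀ Y, (∑ u, F (E (u, Y)) * ind (∀ s ∈ A, E (u, Y) c s = E (u, Y) d s))
      = F (E (u0, Y)) * 2 ^ (n - A.card) := by
    intro Y
    have step : ∀ u, F (E (u, Y)) * ind (∀ s ∈ A, E (u, Y) c s = E (u, Y) d s)
        = F (E (u0, Y)) * ind (∀ s ∈ A, u s = Y ⟨d, hd⟩ s) := by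
      intro u
      rw [hFE u Y]
      congr 1
      refine ind_congr ?_
      constructor
      · intro h s hs; rw [← hEc u Y, ← hEd u Y d hd]; exact h s hs
      · intro h s hs; rw [hEc, hEd u Y d hd]; exact h s hs
    rw [Finset.sum_congr rfl (fun u _ => step u), ← Finset.mul_sum,
      card_agree A (Y ⟨d, hd⟩)]
  have inner2 : ∀ Y, (∑ u : Fin n → Bool, F (E (u, Y))) = F (E (u0, Y)) * 2 ^ n := by
    intro Y
    rw [Finset.sum_congr rfl (fun u _ => hFE u Y)]
    simp [Finset.sum_const, mul_comm]
  have lhs : ∑ X : Fin m → Fin n → Bool, F X * ind (∀ s ∈ A, X c s = X d s)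
      = (∑ Y, F (E (u0, Y))) * 2 ^ (n - A.card) := by
    rw [← Equiv.sum_comp E (fun X => F X * ind (∀ s ∈ A, X c s = X d s))]
    rw [Fintype.sum_prod_type_right]
    rw [Finset.sum_congr rfl (fun Y _ => inner1 Y), Finset.sum_mul]
  have rhs : ∑ X : Fin m → Fin n → Bool, F X = (∑ Y, F (E (u0, Y))) * 2 ^ n := by
    rw [← Equiv.sum_comp E F, Fintype.sum_prod_type_right]
    rw [Finset.sum_congr rfl (fun Y _ => inner2 Y), Finset.sum_mul]
  rw [lhs, rhs]
  have hA : A.card ≤ n := by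
    have := Finset.card_le_univ A
    simpa using this
  rw [pow_sub₀ (2 : ℝ) (by norm_num) hA]
  ring

def W (n k a : ℕ) : Finset (Fin n) :=
  univ.filter (fun s : Fin n => a ≤ (s : ℕ) ∧ (s : ℕ) < a + k)

lemma mem_W {n k a : ℕ} {s : Fin n} : s ∈ W n k a ↔ a ≤ (s : ℕ) ∧ (s : ℕ) < a + k := by
  simp [W]

lemma kmer_eq_iff {n k a : ℕ} (h : a + k ≤ n) (u v : Fin n → Bool) :
    kmer k u a = kmer k v a ↔ ∀ s ∈ W n k a, u s = v s := by
  constructor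
  · intro he s hs
    rw [mem_W] at hs
    have ht : (s : ℕ) - a < k := by omega
    have h2 := congrFun he ⟨(s : ℕ) - a, ht⟩
    simp only [kmer, _root_.get] at h2
    have hlt : a + ((s : ℕ) - a) < n := by omega
    rw [dif_pos hlt, dif_pos hlt] at h2
    have hs' : s = ⟨a + ((s : ℕ) - a), hlt⟩ := by
      apply Fin.ext; show (s : ℕ) = a + ((s : ℕ) - a); omega
    rw [hs']
    exact h2
  · intro hagree
    funext t
    simp only [kmer, _root_.get]
    have hlt : a + (t : ℕ) < n := by have := t.2; omega
    rw [dif_pos hlt, dif_pos hlt]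
    exact hagree ⟨a + (t : ℕ), hlt⟩ (mem_W.2 (by simp))

lemma card_W {n k a : ℕ} (h : a + k ≤ n) : (W n k a).card = k := by
  have himg : W n k a
      = Finset.image (fun t : Fin k => (⟨a + t.1, by have := t.2; omega⟩ : Fin n)) univ := by
    ext s
    simp only [mem_W, Finset.mem_image, Finset.mem_univ, true_and]
    constructor
    · rintro ⟨h1, h2⟩
      refine ⟨⟨(s : ℕ) - a, by omega⟩, ?_⟩
      apply Fin.ext; show a + ((s : ℕ) - a) = (s : ℕ); omega
    · rintro ⟨t, rfl⟩
      have := t.2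
      simp
  rw [himg, Finset.card_image_of_injective _ ?_, Finset.card_univ, Fintype.card_fin]
  intro t t' htt
  have := congrArg Fin.val htt
  simp only at this
  apply Fin.ext; omega

lemma disjoint_W {n k a a' : ℕ} (h : a + k ≤ a' ∨ a' + k ≤ a) :
    Disjoint (W n k a) (W n k a') := by
  rw [Finset.disjoint_left]
  intro s hs hs'
  rw [mem_W] at hs hs'
  omega

def good (n m k : ℕ) (q : Fin m × Fin m × Fin n) (X : Fin m → Fin n → Bool) : Prop :=
  q.1 < q.2.1 ∧ (q.2.2 : ℕ) + k ≤ n ∧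
    kmer k (X q.1) (q.2.2 : ℕ) = kmer k (X q.2.1) (q.2.2 : ℕ)

lemma good_update {n m k : ℕ} {q : Fin m × Fin m × Fin n} {c : Fin m}
    (h1 : q.1 ≠ c) (h2 : q.2.1 ≠ c) (X : Fin m → Fin n → Bool) (u : Fin n → Bool) :
    good n m k q (Function.update X c u) ↔ good n m k q X := by
  unfold good
  rw [Function.update_of_ne h1, Function.update_of_ne h2]

lemma Vcount_cast {n m k : ℕ} (hk : 1 ≤ k) (X : Fin m → Fin n → Bool) :
    (Vcount n m k X : ℝ) = ∑ q : Fin m × Fin m × Fin n, ind (good n m k q X) := by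
  rw [sum_ind_eq_nat_card]
  norm_cast
  unfold Vcount
  apply Nat.card_congr
  refine ⟨fun q => ⟨(q.1.1, q.1.2.1, ⟨q.1.2.2, by have := q.2.2.1; omega⟩), ?_⟩,
    fun q => ⟨(q.1.1, q.1.2.1, (q.1.2.2 : ℕ)), q.2⟩, ?_, ?_⟩
  · exact q.2
  · rintro ⟨⟨i, j, a⟩, hp⟩; rfl
  · rintro ⟨⟨i, j, a⟩, hp⟩
    apply Subtype.ext
    simp

lemma single_sum {n m k : ℕ} (q : Fin m × Fin m × Fin n)
    (hq : q.1 < q.2.1) (ha : (q.2.2 : ℕ) + k ≤ n) :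
    ∑ X : Fin m → Fin n → Bool, ind (good n m k q X) = (2 : ℝ) ^ (n * m) / 2 ^ k := by
  have hne : q.1 ≠ q.2.1 := ne_of_lt hq
  have h := split_sum q.2.1 q.1 hne (W n k (q.2.2 : ℕ)) (fun _ => 1) (fun _ _ => rfl)
  have hcongr : ∀ X : Fin m → Fin n → Bool, ind (good n m k q X)
      = 1 * ind (∀ s ∈ W n k (q.2.2 : ℕ), X q.2.1 s = X q.1 s) := by
    intro X
    rw [one_mul]
    refine ind_congr ?_
    unfold good
    rw [kmer_eq_iff ha]
    constructor
    · rintro ⟨-, -, h3⟩ s hs; exact (h3 s hs).symm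
    · intro h3; exact ⟨hq, ha, fun s hs => (h3 s hs).symm⟩
  rw [Finset.sum_congr rfl (fun X _ => hcongr X), h, card_W ha]
  congr 1
  rw [Finset.sum_const, Finset.card_univ, Fintype.card_fun, Fintype.card_fun]
  simp [← pow_mul]

lemma card_omega (n m : ℕ) :
    (∑ _X : Fin m → Fin n → Bool, (1 : ℝ)) = 2 ^ (n * m) := by
  rw [Finset.sum_const, Finset.card_univ, Fintype.card_fun, Fintype.card_fun]
  simp [← pow_mul]

def close (k : ℕ) {n m : ℕ} (q q' : Fin m × Fin m × Fin n) : Prop :=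
  q'.1 = q.1 ∧ q'.2.1 = q.2.1 ∧ (q'.2.2 : ℕ) < (q.2.2 : ℕ) + k ∧ (q.2.2 : ℕ) < (q'.2.2 : ℕ) + k

lemma pair_bound {n m k : ℕ} (hk : 1 ≤ k) (q q' : Fin m × Fin m × Fin n) :
    ∑ X : Fin m → Fin n → Bool, ind (good n m k q X ∧ good n m k q' X)
      ≤ (2 : ℝ) ^ (n * m) / 2 ^ (2 * k)
        + ind (close k q q') * ((2 : ℝ) ^ (n * m) / 2 ^ k) := by
  have hrhs1 : (0 : ℝ) ≤ (2 : ℝ) ^ (n * m) / 2 ^ (2 * k) := by positivity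
  have hrhs2 : (0 : ℝ) ≤ ind (close k q q') * ((2 : ℝ) ^ (n * m) / 2 ^ k) :=
    mul_nonneg (ind_nonneg _) (by positivity)
  by_cases hq : q.1 < q.2.1 ∧ (q.2.2 : ℕ) + k ≤ n
  swap
  · have : ∀ X : Fin m → Fin n → Bool, ind (good n m k q X ∧ good n m k q' X) = 0 := by
      intro X
      refine ind_of_false ?_
      rintro ⟨⟨h1, h2, -⟩, -⟩
      exact hq ⟨h1, h2⟩
    rw [Finset.sum_congr rfl (fun X _ => this X)]
    simpa using add_nonneg hrhs1 hrhs2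
  by_cases hq' : q'.1 < q'.2.1 ∧ (q'.2.2 : ℕ) + k ≤ n
  swap
  · have : ∀ X : Fin m → Fin n → Bool, ind (good n m k q X ∧ good n m k q' X) = 0 := by
      intro X
      refine ind_of_false ?_
      rintro ⟨-, h1, h2, -⟩
      exact hq' ⟨h1, h2⟩
    rw [Finset.sum_congr rfl (fun X _ => this X)]
    simpa using add_nonneg hrhs1 hrhs2
  obtain ⟨hq1, hq2⟩ := hq
  obtain ⟨hq1', hq2'⟩ := hq'
  by_cases hsame : q'.1 = q.1 ∧ q'.2.1 = q.2.1
  · by_cases hover : (q'.2.2 : ℕ) < (q.2.2 : ℕ) + k ∧ (q.2.2 : ℕ) < (q'.2.2 : ℕ) + k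
    · -- overlapping windows, same pair: crude bound 2^{nm}/2^k
      have hclose : ind (close k q q') = 1 :=
        ind_of_true ⟨hsame.1, hsame.2, hover.1, hover.2⟩
      calc ∑ X : Fin m → Fin n → Bool, ind (good n m k q X ∧ good n m k q' X)
          ≤ ∑ X : Fin m → Fin n → Bool, ind (good n m k q X) :=
            Finset.sum_le_sum (fun X _ => ind_mono And.left)
        _ = (2 : ℝ) ^ (n * m) / 2 ^ k := single_sum q hq1 hq2
        _ ≤ _ := by rw [hclose, one_mul]; linarith
    · -- disjoint windows, same pair
      have hdisj : Disjoint (W n k (q.2.2 : ℕ)) (W n k (q'.2.2 : ℕ)) :=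
        disjoint_W (by omega)
      have hne : q.1 ≠ q.2.1 := ne_of_lt hq1
      have h := split_sum q.2.1 q.1 hne (W n k (q.2.2 : ℕ) ∪ W n k (q'.2.2 : ℕ))
        (fun _ => 1) (fun _ _ => rfl)
      have hcongr : ∀ X : Fin m → Fin n → Bool,
          ind (good n m k q X ∧ good n m k q' X)
          = 1 * ind (∀ s ∈ W n k (q.2.2 : ℕ) ∪ W n k (q'.2.2 : ℕ),
              X q.2.1 s = X q.1 s) := by
        intro X
        rw [one_mul]
        refine ind_congr ?_
        rw [Finset.forall_mem_union]
        unfold good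
        rw [kmer_eq_iff hq2, kmer_eq_iff hq2', hsame.1, hsame.2]
        constructor
        · rintro ⟨⟨-, -, h3⟩, ⟨-, -, h4⟩⟩
          exact ⟨fun s hs => (h3 s hs).symm, fun s hs => (h4 s hs).symm⟩
        · rintro ⟨h3, h4⟩
          exact ⟨⟨hq1, hq2, fun s hs => (h3 s hs).symm⟩,
            ⟨hq1, hq2', fun s hs => (h4 s hs).symm⟩⟩
      rw [Finset.sum_congr rfl (fun X _ => hcongr X), h,
        Finset.card_union_of_disjoint hdisj, card_W hq2, card_W hq2', card_omega]
      have : k + k = 2 * k := by ring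
      rw [this]
      linarith
  · -- different pairs: find a fresh index c
    obtain ⟨c, d, hc1, hc2, hdc, hiff⟩ :
        ∃ c d : Fin m, q.1 ≠ c ∧ q.2.1 ≠ c ∧ d ≠ c ∧
          ∀ X : Fin m → Fin n → Bool,
            (kmer k (X q'.1) (q'.2.2 : ℕ) = kmer k (X q'.2.1) (q'.2.2 : ℕ)
              ↔ ∀ s ∈ W n k (q'.2.2 : ℕ), X c s = X d s) := by
      by_cases hj' : q'.2.1 ≠ q.1 ∧ q'.2.1 ≠ q.2.1
      · refine ⟨q'.2.1, q'.1, hj'.1.symm, hj'.2.symm, ne_of_lt hq1', fun X => ?_⟩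
        rw [kmer_eq_iff hq2']
        exact ⟨fun h s hs => (h s hs).symm, fun h s hs => (h s hs).symm⟩
      · -- q'.2.1 ∈ {q.1, q.2.1}; then q'.1 is fresh
        have hfresh : q'.1 ≠ q.1 ∧ q'.1 ≠ q.2.1 := by
          push_neg at hj'
          constructor
          · intro hcon
            by_cases hjq : q'.2.1 = q.1
            · exact absurd (hcon ▸ hjq ▸ hq1') (lt_irrefl _)
            · exact hsame ⟨hcon, hj' hjq⟩
          · intro hcon
            by_cases hjq : q'.2.1 = q.1
            · have : q'.1 < q.1 := hjq ▸ hq1'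
              have : q.1 < q.1 := by
                calc q.1 < q.2.1 := hq1
                _ = q'.1 := hcon.symm
                _ < q.1 := this
              exact absurd this (lt_irrefl _)
            · have hj2 := hj' hjq
              exact absurd (hcon ▸ hj2 ▸ hq1') (lt_irrefl _)
        refine ⟨q'.1, q'.2.1, hfresh.1.symm, hfresh.2.symm, (ne_of_lt hq1').symm, fun X => ?_⟩
        rw [kmer_eq_iff hq2']
    have hF : ∀ (X : Fin m → Fin n → Bool) (u : Fin n → Bool),
        ind (good n m k q (Function.update X c u)) = ind (good n m k q X) :=
      fun X u => ind_congr (good_update hc1 hc2 X u)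
    have h := split_sum c d hdc (W n k (q'.2.2 : ℕ))
      (fun X => ind (good n m k q X)) hF
    have hcongr : ∀ X : Fin m → Fin n → Bool,
        ind (good n m k q X ∧ good n m k q' X)
        = ind (good n m k q X) * ind (∀ s ∈ W n k (q'.2.2 : ℕ), X c s = X d s) := by
      intro X
      rw [ind_mul_ind]
      refine ind_congr ?_
      constructor
      · rintro ⟨hg, -, -, h3⟩; exact ⟨hg, (hiff X).1 h3⟩
      · rintro ⟨hg, h3⟩; exact ⟨hg, hq1', hq2', (hiff X).2 h3⟩
    rw [Finset.sum_congr rfl (fun X _ => hcongr X), h, card_W hq2',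
      single_sum q hq1 hq2]
    have : (2 : ℝ) ^ (n * m) / 2 ^ k / 2 ^ k = 2 ^ (n * m) / 2 ^ (2 * k) := by
      rw [div_div, ← pow_add, two_mul]
    rw [this]
    linarith

lemma close_count {n m k : ℕ} (q : Fin m × Fin m × Fin n) :
    ∑ q' : Fin m × Fin m × Fin n, ind (close k q q') ≤ (2 * k : ℝ) := by
  classical
  set B : Finset (Fin m × Fin m × Fin n) :=
    univ.filter (fun q' => q'.1 = q.1 ∧ q'.2.1 = q.2.1 ∧
      (q'.2.2 : ℕ) < (q.2.2 : ℕ) + k ∧ (q.2.2 : ℕ) < (q'.2.2 : ℕ) + k) with hB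
  have h1 : ∑ q' : Fin m × Fin m × Fin n, ind (close k q q') ≤ (B.card : ℝ) := by
    refine sum_ind_le_card _ B (fun q' hq' => ?_)
    rw [hB, Finset.mem_filter]
    exact ⟨Finset.mem_univ _, hq'.1, hq'.2.1, hq'.2.2.1, hq'.2.2.2⟩
  have h2 : B.card ≤ 2 * k := by
    have key : ∀ q' ∈ B, q'.1 = q.1 ∧ q'.2.1 = q.2.1 ∧
        (q'.2.2 : ℕ) < (q.2.2 : ℕ) + k ∧ (q.2.2 : ℕ) < (q'.2.2 : ℕ) + k := by
      intro q' hq'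
      rw [hB, Finset.mem_filter] at hq'
      exact hq'.2
    have := Finset.card_le_card_of_injOn
      (f := fun q' : Fin m × Fin m × Fin n => (q'.2.2 : ℕ))
      (t := Finset.Ico ((q.2.2 : ℕ) + 1 - k) ((q.2.2 : ℕ) + k))
      (fun q' hq' => by
        have h := key q' hq'
        simp only [Finset.mem_coe, Finset.mem_Ico]
        omega)
      (fun q1 hq1 q2 hq2 hval => by
        have h1 := key q1 (Finset.mem_coe.1 hq1)
        have h2 := key q2 (Finset.mem_coe.1 hq2)
        have e1 : q1.1 = q2.1 := h1.1.trans h2.1.symm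
        have e2 : q1.2.1 = q2.2.1 := h1.2.1.trans h2.2.1.symm
        have e3 : q1.2.2 = q2.2.2 := Fin.ext hval
        exact Prod.ext e1 (Prod.ext e2 e3))
    rw [Nat.card_Ico] at this
    omega
  calc ∑ q' : Fin m × Fin m × Fin n, ind (close k q q') ≤ (B.card : ℝ) := h1
    _ ≤ (2 * k : ℝ) := by exact_mod_cast Nat.cast_le.2 h2


/-- `E[V²] ≤ m⁴·n²·2^{-2k} + 2·m²·n·k·2^{-k}`. -/
theorem Vcount_second_moment
    (n m k : ℕ) (hk : 1 ≤ k) (hkn : k < n) (hm : 2 ≤ m) :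
    expect (fun X : Fin m → Fin n → Bool => (Vcount n m k X : ℝ) ^ 2) ≤
      (m : ℝ) ^ 4 * (n : ℝ) ^ 2 / 2 ^ (2 * k) +
        2 * (m : ℝ) ^ 2 * (n : ℝ) * (k : ℝ) / 2 ^ k := by
  have hΩ : (Fintype.card (Fin m → Fin n → Bool) : ℝ) = 2 ^ (n * m) := by
    rw [Fintype.card_fun, Fintype.card_fun, Fintype.card_bool, Fintype.card_fin,
      Fintype.card_fin, ← pow_mul]
    push_cast
    ring
  unfold _root_.expect
  rw [hΩ, div_le_iff₀ (by positivity)]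
  have hV : ∀ X : Fin m → Fin n → Bool, ((Vcount n m k X : ℝ)) ^ 2
      = ∑ q : Fin m × Fin m × Fin n, ∑ q' : Fin m × Fin m × Fin n,
          ind (good n m k q X ∧ good n m k q' X) := by
    intro X
    rw [Vcount_cast hk, sq, Finset.sum_mul_sum]
    exact Finset.sum_congr rfl fun q _ => Finset.sum_congr rfl fun q' _ => ind_mul_ind _ _
  rw [Finset.sum_congr rfl (fun X _ => hV X)]
  rw [Finset.sum_comm]
  rw [Finset.sum_congr rfl (fun q _ => Finset.sum_comm)]
  have hcard : (Fintype.card (Fin m × Fin m × Fin n)) = m * m * n := by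
    simp [Fintype.card_prod, Fintype.card_fin]; ring
  have step1 : ∀ q : Fin m × Fin m × Fin n,
      ∑ q' : Fin m × Fin m × Fin n, ∑ X : Fin m → Fin n → Bool,
        ind (good n m k q X ∧ good n m k q' X)
      ≤ (m * m * n : ℝ) * ((2 : ℝ) ^ (n * m) / 2 ^ (2 * k))
        + (2 * k : ℝ) * ((2 : ℝ) ^ (n * m) / 2 ^ k) := by
    intro q
    calc ∑ q' : Fin m × Fin m × Fin n, ∑ X : Fin m → Fin n → Bool,
          ind (good n m k q X ∧ good n m k q' X)
        ≤ ∑ q' : Fin m × Fin m × Fin n, ((2 : ℝ) ^ (n * m) / 2 ^ (2 * k)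
            + ind (close k q q') * ((2 : ℝ) ^ (n * m) / 2 ^ k)) :=
          Finset.sum_le_sum (fun q' _ => pair_bound hk q q')
      _ = (Fintype.card (Fin m × Fin m × Fin n) : ℝ) * ((2 : ℝ) ^ (n * m) / 2 ^ (2 * k))
            + (∑ q' : Fin m × Fin m × Fin n, ind (close k q q'))
              * ((2 : ℝ) ^ (n * m) / 2 ^ k) := by
          rw [Finset.sum_add_distrib, Finset.sum_const, Finset.card_univ, ← Finset.sum_mul]
          simp [nsmul_eq_mul]
      _ ≤ _ := by
          have h1 := close_count (k := k) q
          have h2 : (0 : ℝ) ≤ (2 : ℝ) ^ (n * m) / 2 ^ k := by positivity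
          have h3 : (Fintype.card (Fin m × Fin m × Fin n) : ℝ) = (m * m * n : ℝ) := by
            rw [hcard]; push_cast; ring
          rw [h3]
          exact add_le_add le_rfl (mul_le_mul_of_nonneg_right h1 h2)
  calc ∑ q : Fin m × Fin m × Fin n,
        ∑ q' : Fin m × Fin m × Fin n, ∑ X : Fin m → Fin n → Bool,
          ind (good n m k q X ∧ good n m k q' X)
      ≤ ∑ _q : Fin m × Fin m × Fin n,
          ((m * m * n : ℝ) * ((2 : ℝ) ^ (n * m) / 2 ^ (2 * k))
            + (2 * k : ℝ) * ((2 : ℝ) ^ (n * m) / 2 ^ k)) :=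
        Finset.sum_le_sum (fun q _ => step1 q)
    _ = (m * m * n : ℝ) * ((m * m * n : ℝ) * ((2 : ℝ) ^ (n * m) / 2 ^ (2 * k))
          + (2 * k : ℝ) * ((2 : ℝ) ^ (n * m) / 2 ^ k)) := by
        rw [Finset.sum_const, Finset.card_univ, hcard, nsmul_eq_mul]
        push_cast
        ring
    _ ≤ ((m : ℝ) ^ 4 * (n : ℝ) ^ 2 / 2 ^ (2 * k)
          + 2 * (m : ℝ) ^ 2 * (n : ℝ) * (k : ℝ) / 2 ^ k) * 2 ^ (n * m) := by
        apply le_of_eq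
        ring
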